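/- Let k be a field, Δ a simplicial complex, and f, g : Δ → ℝ monotonic functions with |f(σ) − g(σ)| ≤ δ for all σ ∈ Δ, where δ ≥ 0. With φ_t : V^f_t → V^g_{t+δ} and ψ_t : V^g_t → V^f_{t+δ} the basis-preserving interleaving maps, for every t ∈ ℝ the interleaving triangles commute: ψ_{t+δ} ∘ φ_t = v^f_{t, t+2δ} and φ_{t+δ} ∘ ψ_t = v^g_{t, t+2δ}. Hence the facet persistence modules V^f and V^g are δ-interleaved. -/
import Mathlib


/-- `σ` is a facet of `Γ`: a face that is maximal under inclusion. -/
def IsFacet {n : ℕ} (Γ : Set (Finset (Fin n))) (σ : Finset (Fin n)) : Prop :=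
  σ ∈ Γ ∧ ∀ τ ∈ Γ, σ ⊆ τ → σ = τ

/-- The sublevel complex `Δ^t_f = {σ ∈ Δ : f σ ≤ t}`. -/
def sublevel {n : ℕ} (Δ : Set (Finset (Fin n))) (f : Finset (Fin n) → ℝ) (t : ℝ) :
    Set (Finset (Fin n)) :=
  {σ | σ ∈ Δ ∧ f σ ≤ t}

/-- The `k`-vector space with basis the facets of `Γ`. -/
abbrev FacetSpace (k : Type*) [Field k] {n : ℕ} (Γ : Set (Finset (Fin n))) :=
  {σ : Finset (Fin n) // IsFacet Γ σ} →₀ k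

open Classical in
/-- The basis-preserving linear map between facet spaces: the basis vector of a facet `σ`
of `Γ₁` is sent to the same basis vector if `σ` is a facet of `Γ₂`, and to `0` otherwise.
It specializes both to the structure maps `v^f_{s,t}`, `v^g_{s,t}` of the facet persistence
modules and to the interleaving maps `φ_t`, `ψ_t`. -/
noncomputable def structMap (k : Type*) [Field k] {n : ℕ}
    (Γ₁ Γ₂ : Set (Finset (Fin n))) :
    FacetSpace k Γ₁ →ₗ[k] FacetSpace k Γ₂ :=
  Finsupp.lsum k fun σ =>
    if h : IsFacet Γ₂ σ.1 then Finsupp.lsingle ⟨σ.1, h⟩ else 0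

open Classical in
lemma structMap_single (k : Type*) [Field k] {n : ℕ}
    (Γ₁ Γ₂ : Set (Finset (Fin n))) (σ : {σ : Finset (Fin n) // IsFacet Γ₁ σ}) (c : k) :
    structMap k Γ₁ Γ₂ (Finsupp.single σ c)
      = if h : IsFacet Γ₂ σ.1 then Finsupp.single ⟨σ.1, h⟩ c else 0 := by
  simp only [structMap, Finsupp.lsum_single]
  split
  · simp [Finsupp.lsingle_apply]
  · simp

lemma facet_middle {n : ℕ} (Δ : Set (Finset (Fin n)))
    (f g : Finset (Fin n) → ℝ) (δ t : ℝ)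
    (hfg : ∀ σ ∈ Δ, |f σ - g σ| ≤ δ)
    (σ : Finset (Fin n))
    (h1 : IsFacet (sublevel Δ f t) σ)
    (h2 : IsFacet (sublevel Δ f (t + 2 * δ)) σ) :
    IsFacet (sublevel Δ g (t + δ)) σ := by
  obtain ⟨⟨hσΔ, hft⟩, _⟩ := h1
  refine ⟨⟨hσΔ, ?_⟩, ?_⟩
  · have := abs_le.mp (hfg σ hσΔ)
    linarith [this.2]
  · rintro τ ⟨hτΔ, hgτ⟩ hsub
    have := abs_le.mp (hfg τ hτΔ)
    exact h2.2 τ ⟨hτΔ, by linarith [this.1]⟩ hsub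

/-- **Interleaving triangles commute.** For monotonic `f, g` with `|f − g| ≤ δ` on `Δ` and
every `t`, one has `ψ_{t+δ} ∘ φ_t = v^f_{t,t+2δ}` and `φ_{t+δ} ∘ ψ_t = v^g_{t,t+2δ}`;
hence the facet persistence modules `V^f` and `V^g` are `δ`-interleaved. -/
theorem interleaving_triangles_commute (k : Type*) [Field k] (n : ℕ)
    (Δ : Set (Finset (Fin n)))
    (hdown : ∀ F ∈ Δ, ∀ G : Finset (Fin n), G ⊆ F → G ∈ Δ)
    (hempty : (∅ : Finset (Fin n)) ∈ Δ)
    (f g : Finset (Fin n) → ℝ)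
    (hmonof : ∀ τ ∈ Δ, ∀ σ ∈ Δ, τ ⊆ σ → f τ ≤ f σ)
    (hmonog : ∀ τ ∈ Δ, ∀ σ ∈ Δ, τ ⊆ σ → g τ ≤ g σ)
    (δ : ℝ) (hδ : 0 ≤ δ)
    (hfg : ∀ σ ∈ Δ, |f σ - g σ| ≤ δ)
    (t : ℝ) :
    ((structMap k (sublevel Δ g (t + δ)) (sublevel Δ f (t + 2 * δ))).comp
        (structMap k (sublevel Δ f t) (sublevel Δ g (t + δ)))
      = structMap k (sublevel Δ f t) (sublevel Δ f (t + 2 * δ))) ∧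
    ((structMap k (sublevel Δ f (t + δ)) (sublevel Δ g (t + 2 * δ))).comp
        (structMap k (sublevel Δ g t) (sublevel Δ f (t + δ)))
      = structMap k (sublevel Δ g t) (sublevel Δ g (t + 2 * δ))) := by
  have hgf : ∀ σ ∈ Δ, |g σ - f σ| ≤ δ := fun σ hσ => abs_sub_comm (f σ) (g σ) ▸ hfg σ hσ
  constructor
  · apply Finsupp.lhom_ext
    intro σ c
    rw [LinearMap.comp_apply, structMap_single, structMap_single]
    by_cases h2 : IsFacet (sublevel Δ f (t + 2 * δ)) σ.1
    · have hmid := facet_middle Δ f g δ t hfg σ.1 σ.2 h2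
      rw [dif_pos hmid, dif_pos h2, structMap_single, dif_pos h2]
    · rw [dif_neg h2]
      split
      · rw [structMap_single, dif_neg h2]
      · simp
  · apply Finsupp.lhom_ext
    intro σ c
    rw [LinearMap.comp_apply, structMap_single, structMap_single]
    by_cases h2 : IsFacet (sublevel Δ g (t + 2 * δ)) σ.1
    · have hmid := facet_middle Δ g f δ t hgf σ.1 σ.2 h2
      rw [dif_pos hmid, dif_pos h2, structMap_single, dif_pos h2]
    · rw [dif_neg h2]
      split
      · rw [structMap_single, dif_neg h2]
      · simp
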